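/- Let (S, Δ, P) be a probability space, let (α,β) be an (α,β)-pair, let 0 < γ₁ ≤ γ₂ ≤ 1, and let g : ℝ → ℝ be a continuous function. If a sequence {X_n} of real-valued random variables on S satisfies X_n →^{PS_{αβ}^{γ₁}} X, then g(X_n) →^{PS_{αβ}^{γ₂}} g(X). -/

import Mathlib

open MeasureTheory Filter Set

/-- An (α,β)-pair: two non-decreasing sequences of positive reals with
`a n ≤ b n` for all `n` and `b n - a n → ∞`. -/
def ABPair (a b : ℕ → ℝ) : Prop :=
  Monotone a ∧ Monotone b ∧ (∀ n, 0 < a n) ∧ (∀ n, a n ≤ b n) ∧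
    Tendsto (fun n => b n - a n) atTop atTop

/-- The set of natural indices `k ∈ [a n, b n]` satisfying a predicate `p`. -/
def abIdx (a b : ℕ → ℝ) (n : ℕ) (p : ℕ → Prop) : Set ℕ :=
  {k : ℕ | a n ≤ (k : ℝ) ∧ (k : ℝ) ≤ b n ∧ p k}

/-- αβ-statistical convergence of order γ of a real sequence `x` to `l`. -/
def ABStatConv (a b : ℕ → ℝ) (γ : ℝ) (x : ℕ → ℝ) (l : ℝ) : Prop :=
  ∀ ε > 0,
    Tendsto (fun n => ((abIdx a b n fun k => ε ≤ |x k - l|).ncard : ℝ) / (b n - a n + 1) ^ γ)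
      atTop (nhds 0)

/-- αβ-statistical convergence of order γ in probability of the sequence of random
variables `X` to the random variable `L`, w.r.t. the probability measure `P`. -/
def PSConv {Ω : Type*} [MeasurableSpace Ω] (P : Measure Ω)
    (a b : ℕ → ℝ) (γ : ℝ) (X : ℕ → Ω → ℝ) (L : Ω → ℝ) : Prop :=
  ∀ ε > 0, ∀ δ > 0,
    Tendsto (fun n =>
      ((abIdx a b n fun k => δ ≤ (P {ω | ε ≤ |X k ω - L ω|}).toReal).ncard : ℝ)
        / (b n - a n + 1) ^ γ) atTop (nhds 0)

/-- αβ-strong p-Cesàro summability of order γ in probability. -/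
def PWConv {Ω : Type*} [MeasurableSpace Ω] (P : Measure Ω)
    (a b : ℕ → ℝ) (γ p : ℝ) (X : ℕ → Ω → ℝ) (L : Ω → ℝ) : Prop :=
  ∀ ε > 0,
    Tendsto (fun n =>
      (∑ k ∈ Finset.Icc ⌈a n⌉₊ ⌊b n⌋₊, ((P {ω | ε ≤ |X k ω - L ω|}).toReal) ^ p)
        / (b n - a n + 1) ^ γ) atTop (nhds 0)

/-- αβ-statistical convergence of order γ in r-th expectation. -/
def ESConv {Ω : Type*} [MeasurableSpace Ω] (P : Measure Ω)
    (a b : ℕ → ℝ) (γ r : ℝ) (X : ℕ → Ω → ℝ) (L : Ω → ℝ) : Prop :=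
  ∀ ε > 0,
    Tendsto (fun n =>
      ((abIdx a b n fun k => ε ≤ ∫ ω, |X k ω - L ω| ^ r ∂P).ncard : ℝ)
        / (b n - a n + 1) ^ γ) atTop (nhds 0)

/-- αβ-statistical convergence of order γ in distribution: the distribution functions
converge αβ-statistically of order γ at every continuity point of the limit d.f. -/
def DSConv {Ω : Type*} [MeasurableSpace Ω] (P : Measure Ω)
    (a b : ℕ → ℝ) (γ : ℝ) (X : ℕ → Ω → ℝ) (L : Ω → ℝ) : Prop :=
  ∀ x : ℝ, ContinuousAt (fun t => (P {ω | L ω ≤ t}).toReal) x →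
    ABStatConv a b γ (fun n => (P {ω | X n ω ≤ x}).toReal) ((P {ω | L ω ≤ x}).toReal)

/-- `K ⊆ ℕ` has αβ-density of order γ zero. -/
def ABDensityZero (a b : ℕ → ℝ) (γ : ℝ) (K : Set ℕ) : Prop :=
  Tendsto (fun n => ((abIdx a b n fun k => k ∈ K).ncard : ℝ) / (b n - a n + 1) ^ γ)
    atTop (nhds 0)

/-- αβ-statistical limit superior of order γ of a real sequence. -/
noncomputable def abStatLimsup (a b : ℕ → ℝ) (γ : ℝ) (x : ℕ → ℝ) : ℝ :=
  sSup {t : ℝ | ¬ ABDensityZero a b γ {k | t < x k}}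

/-- αβ-statistical limit inferior of order γ of a real sequence. -/
noncomputable def abStatLiminf (a b : ℕ → ℝ) (γ : ℝ) (x : ℕ → ℝ) : ℝ :=
  sInf {t : ℝ | ¬ ABDensityZero a b γ {k | x k < t}}
/-- Theorem 2.2(iv): continuous images of αβ-statistically convergent (in probability)
sequences converge (with an order `γ₂ ≥ γ₁`). -/
theorem PSConv_continuous_image {Ω : Type*} [MeasurableSpace Ω]
    (P : Measure Ω) [IsProbabilityMeasure P]
    (a b : ℕ → ℝ) (hab : ABPair a b)
    (γ₁ γ₂ : ℝ) (hγ₁0 : 0 < γ₁) (h12 : γ₁ ≤ γ₂) (hγ₂1 : γ₂ ≤ 1)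
    (g : ℝ → ℝ) (hg : Continuous g)
    (X : ℕ → Ω → ℝ) (X₀ : Ω → ℝ)
    (hX : ∀ n, Measurable (X n)) (hX₀ : Measurable X₀)
    (h : PSConv P a b γ₁ X X₀) :
    PSConv P a b γ₂ (fun n ω => g (X n ω)) (fun ω => g (X₀ ω)) := by
  intro ε hε δ hδ
  -- choose m with P(|X₀| ≥ m) < δ/2
  obtain ⟨m, hm⟩ : ∃ m : ℕ, (P {ω | (m : ℝ) ≤ |X₀ ω|}).toReal < δ / 2 := by
    have hmeas : ∀ m : ℕ, MeasurableSet {ω | (m : ℝ) ≤ |X₀ ω|} := fun m =>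
      measurableSet_le measurable_const hX₀.abs
    have hanti : Antitone (fun m : ℕ => {ω | (m : ℝ) ≤ |X₀ ω|}) := by
      intro i j hij ω hω
      simp only [Set.mem_setOf_eq] at hω ⊢
      exact le_trans (by exact_mod_cast hij) hω
    have hempty : (⋂ m : ℕ, {ω | (m : ℝ) ≤ |X₀ ω|}) = ∅ := by
      ext ω
      simp only [Set.mem_iInter, Set.mem_setOf_eq, Set.mem_empty_iff_false, iff_false, not_forall]
      obtain ⟨m, hm⟩ := exists_nat_gt (|X₀ ω|)
      exact ⟨m, not_le.mpr hm⟩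
    have htend : Tendsto (fun m : ℕ => P {ω | (m : ℝ) ≤ |X₀ ω|}) atTop (nhds 0) := by
      have := MeasureTheory.tendsto_measure_iInter_atTop (μ := P)
        (fun m => (hmeas m).nullMeasurableSet) hanti ⟨0, measure_ne_top P _⟩
      rw [hempty] at this
      simpa [Function.comp_def] using this
    have hpos : (0 : ENNReal) < ENNReal.ofReal (δ / 2) := ENNReal.ofReal_pos.mpr (by linarith)
    obtain ⟨m, hm⟩ := (htend.eventually_lt_const hpos).exists
    exact ⟨m, ENNReal.toReal_lt_of_lt_ofReal hm⟩
  -- uniform continuity of g on a compact interval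
  have hcomp : IsCompact (Set.Icc (-(m + 1) : ℝ) (m + 1)) := isCompact_Icc
  have hUC := hcomp.uniformContinuousOn_of_continuous hg.continuousOn
  rw [Metric.uniformContinuousOn_iff] at hUC
  obtain ⟨η, hη, hηg⟩ := hUC ε hε
  set η' := min η 1 with hη'def
  have hη' : 0 < η' := lt_min hη one_pos
  -- event inclusion
  have hsub : ∀ k, {ω | ε ≤ |g (X k ω) - g (X₀ ω)|} ⊆
      {ω | η' ≤ |X k ω - X₀ ω|} ∪ {ω | (m : ℝ) ≤ |X₀ ω|} := by
    intro k ω hω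
    by_contra hc
    simp only [Set.mem_union, Set.mem_setOf_eq, not_or, not_le] at hc
    obtain ⟨h1, h2⟩ := hc
    have hX₀mem : X₀ ω ∈ Set.Icc (-(m + 1) : ℝ) (m + 1) := by
      constructor <;> [nlinarith [abs_le.mp (le_of_lt (lt_of_lt_of_le h2 (le_refl _))), neg_abs_le (X₀ ω)];
        nlinarith [le_abs_self (X₀ ω)]]
    have hXkmem : X k ω ∈ Set.Icc (-(m + 1) : ℝ) (m + 1) := by
      have h3 : |X k ω - X₀ ω| < 1 := lt_of_lt_of_le h1 (min_le_right _ _)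
      have := abs_le.mp (le_of_lt h3)
      have := neg_abs_le (X₀ ω)
      have := le_abs_self (X₀ ω)
      constructor <;> nlinarith
    have hdist : dist (X k ω) (X₀ ω) < η := by
      rw [Real.dist_eq]; exact lt_of_lt_of_le h1 (min_le_left _ _)
    have := hηg _ hXkmem _ hX₀mem hdist
    rw [Real.dist_eq] at this
    exact absurd hω.out (not_le.mpr this)
  -- measure bound
  have hPle : ∀ k, (P {ω | ε ≤ |g (X k ω) - g (X₀ ω)|}).toReal ≤
      (P {ω | η' ≤ |X k ω - X₀ ω|}).toReal + (P {ω | (m : ℝ) ≤ |X₀ ω|}).toReal := by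
    intro k
    have h1 : P {ω | ε ≤ |g (X k ω) - g (X₀ ω)|} ≤
        P {ω | η' ≤ |X k ω - X₀ ω|} + P {ω | (m : ℝ) ≤ |X₀ ω|} :=
      le_trans (measure_mono (hsub k)) (measure_union_le _ _)
    calc (P {ω | ε ≤ |g (X k ω) - g (X₀ ω)|}).toReal
        ≤ (P {ω | η' ≤ |X k ω - X₀ ω|} + P {ω | (m : ℝ) ≤ |X₀ ω|}).toReal :=
          ENNReal.toReal_mono (ENNReal.add_ne_top.mpr ⟨measure_ne_top P _, measure_ne_top P _⟩) h1
      _ = _ := ENNReal.toReal_add (measure_ne_top P _) (measure_ne_top P _)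
  -- index set inclusion
  have hidx : ∀ n, (abIdx a b n fun k =>
        δ ≤ (P {ω | ε ≤ |g (X k ω) - g (X₀ ω)|}).toReal) ⊆
      (abIdx a b n fun k => δ / 2 ≤ (P {ω | η' ≤ |X k ω - X₀ ω|}).toReal) := by
    intro n k hk
    obtain ⟨h1, h2, h3⟩ := hk
    refine ⟨h1, h2, ?_⟩
    have := hPle k
    linarith
  have hfin : ∀ n, (abIdx a b n fun k =>
      δ / 2 ≤ (P {ω | η' ≤ |X k ω - X₀ ω|}).toReal).Finite := by
    intro n
    apply Set.Finite.subset (Set.finite_Icc 0 ⌊b n⌋₊)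
    intro k hk
    exact Set.mem_Icc.mpr ⟨Nat.zero_le _, Nat.le_floor hk.2.1⟩
  -- squeeze
  have hbase : ∀ n, (1 : ℝ) ≤ b n - a n + 1 := fun n => by linarith [hab.2.2.2.1 n]
  refine squeeze_zero (fun n => div_nonneg (Nat.cast_nonneg _) (Real.rpow_nonneg (by linarith [hbase n]) _)) (fun n => ?_) (h η' hη' (δ / 2) (by linarith))
  have hN : ((abIdx a b n fun k =>
        δ ≤ (P {ω | ε ≤ |g (X k ω) - g (X₀ ω)|}).toReal).ncard : ℝ) ≤
      ((abIdx a b n fun k => δ / 2 ≤ (P {ω | η' ≤ |X k ω - X₀ ω|}).toReal).ncard : ℝ) := by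
    exact_mod_cast Set.ncard_le_ncard (hidx n) (hfin n)
  have hD1 : (0 : ℝ) < (b n - a n + 1) ^ γ₁ :=
    Real.rpow_pos_of_pos (by linarith [hbase n]) _
  have hD12 : (b n - a n + 1) ^ γ₁ ≤ (b n - a n + 1) ^ γ₂ :=
    Real.rpow_le_rpow_of_exponent_le (hbase n) h12
  exact div_le_div₀ (by positivity) hN hD1 hD12
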